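/- For any combinatory pre-model A, combinatory pre-model B, n ≥ 1, homomorphism f : A → B, and elements b_1, ..., b_n of B, there exists a unique homomorphism g : A[x_1,...,x_n] → B such that g ∘ η_n = f and g(x_i) = b_i for each i ≤ n (universal property of the polynomial algebra). -/

import Mathlib

/-- A combinatory pre-model: an applicative structure with constants
`k`, `s`, `i`, `e` satisfying the usual equations. -/
structure CPM : Type 1 where
  carrier : Type
  app : carrier → carrier → carrier
  k : carrier
  s : carrier
  i : carrier
  e : carrier
  k_ax : ∀ a b, app (app k a) b = a
  s_ax : ∀ a b c, app (app (app s a) b) c = app (app a c) (app b c)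
  i_ax : ∀ a, app i a = a
  e_ax : ∀ a b, app (app e a) b = app a b

/-- Homomorphisms of combinatory pre-models. -/
structure CPMHom (A B : CPM) where
  toFun : A.carrier → B.carrier
  map_app : ∀ a b, toFun (A.app a b) = B.app (toFun a) (toFun b)
  map_k : toFun A.k = B.k
  map_s : toFun A.s = B.s
  map_i : toFun A.i = B.i
  map_e : toFun A.e = B.e

/-- Terms: the free applicative structure over a set `S`. -/
inductive Tm (S : Type) : Type
  | of : S → Tm S
  | app : Tm S → Tm S → Tm S

/-- The congruence generated by the combinator equations and the embedding
relation, defining the polynomial algebra over `A` in indeterminates `V`. -/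
inductive PolyEq (A : CPM) (V : Type) : Tm (V ⊕ A.carrier) → Tm (V ⊕ A.carrier) → Prop
  | kEq (t u) : PolyEq A V (.app (.app (.of (.inr A.k)) t) u) t
  | sEq (t u v) : PolyEq A V (.app (.app (.app (.of (.inr A.s)) t) u) v)
      (.app (.app t v) (.app u v))
  | iEq (t) : PolyEq A V (.app (.of (.inr A.i)) t) t
  | eEq (t u) : PolyEq A V (.app (.app (.of (.inr A.e)) t) u) (.app t u)
  | inj (a b : A.carrier) :
      PolyEq A V (.app (.of (.inr a)) (.of (.inr b))) (.of (.inr (A.app a b)))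
  | refl (t) : PolyEq A V t t
  | symm {t u} : PolyEq A V t u → PolyEq A V u t
  | trans {t u v} : PolyEq A V t u → PolyEq A V u v → PolyEq A V t v
  | congr {t t' u u'} : PolyEq A V t t' → PolyEq A V u u' →
      PolyEq A V (.app t u) (.app t' u')

/-- Application on the quotient. -/
def polyApp (A : CPM) (V : Type) :
    Quot (PolyEq A V) → Quot (PolyEq A V) → Quot (PolyEq A V) :=
  Quot.lift
    (fun t => Quot.lift (fun u => Quot.mk _ (Tm.app t u))
      (fun _ _ h => Quot.sound (PolyEq.congr (PolyEq.refl t) h)))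
    (fun t t' h => by
      funext q
      induction q using Quot.ind with
      | _ u => exact Quot.sound (PolyEq.congr h (PolyEq.refl u)))

/-- The polynomial algebra `A[V]`. -/
def polyAlg (A : CPM) (V : Type) : CPM where
  carrier := Quot (PolyEq A V)
  app := polyApp A V
  k := Quot.mk _ (.of (.inr A.k))
  s := Quot.mk _ (.of (.inr A.s))
  i := Quot.mk _ (.of (.inr A.i))
  e := Quot.mk _ (.of (.inr A.e))
  k_ax := by
    intro a b
    induction a using Quot.ind with | _ t =>
    induction b using Quot.ind with | _ u =>
    exact Quot.sound (PolyEq.kEq t u)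
  s_ax := by
    intro a b c
    induction a using Quot.ind with | _ t =>
    induction b using Quot.ind with | _ u =>
    induction c using Quot.ind with | _ v =>
    exact Quot.sound (PolyEq.sEq t u v)
  i_ax := by
    intro a
    induction a using Quot.ind with | _ t =>
    exact Quot.sound (PolyEq.iEq t)
  e_ax := by
    intro a b
    induction a using Quot.ind with | _ t =>
    induction b using Quot.ind with | _ u =>
    exact Quot.sound (PolyEq.eEq t u)

/-- The canonical embedding `η : A → A[V]`. -/
def eta (A : CPM) (V : Type) : CPMHom A (polyAlg A V) where
  toFun a := Quot.mk _ (.of (.inr a))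
  map_app a b := (Quot.sound (PolyEq.inj a b)).symm
  map_k := rfl
  map_s := rfl
  map_i := rfl
  map_e := rfl

/-- The indeterminate `v` as an element of `A[V]`. -/
def xvar (A : CPM) (V : Type) (v : V) : (polyAlg A V).carrier :=
  Quot.mk _ (.of (.inl v))

def evalTm (A B : CPM) (V : Type) (f : CPMHom A B) (b : V → B.carrier) :
    Tm (V ⊕ A.carrier) → B.carrier
  | .of (.inl v) => b v
  | .of (.inr a) => f.toFun a
  | .app t u => B.app (evalTm A B V f b t) (evalTm A B V f b u)

theorem evalTm_sound (A B : CPM) (V : Type) (f : CPMHom A B) (b : V → B.carrier)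
    {t u} (h : PolyEq A V t u) : evalTm A B V f b t = evalTm A B V f b u := by
  induction h with
  | kEq t u => simp [evalTm, f.map_k, B.k_ax]
  | sEq t u v => simp [evalTm, f.map_s, B.s_ax]
  | iEq t => simp [evalTm, f.map_i, B.i_ax]
  | eEq t u => simp [evalTm, f.map_e, B.e_ax]
  | inj a c => simp [evalTm, f.map_app]
  | refl t => rfl
  | symm _ ih => exact ih.symm
  | trans _ _ ih1 ih2 => exact ih1.trans ih2
  | congr _ _ ih1 ih2 => simp [evalTm, ih1, ih2]

/-- universal property of the polynomial algebra
`A[x₁,…,xₙ]`. -/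
theorem polyAlg_universal_property (A B : CPM) (n : ℕ) (hn : 1 ≤ n)
    (f : CPMHom A B) (b : Fin n → B.carrier) :
    ∃! g : CPMHom (polyAlg A (Fin n)) B,
      (∀ a, g.toFun ((eta A (Fin n)).toFun a) = f.toFun a) ∧
      (∀ i : Fin n, g.toFun (xvar A (Fin n) i) = b i) := by
  refine ⟨⟨Quot.lift (evalTm A B (Fin n) f b) (fun _ _ h => evalTm_sound A B (Fin n) f b h),
    ?_, f.map_k, f.map_s, f.map_i, f.map_e⟩, ⟨fun a => rfl, fun i => rfl⟩, ?_⟩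
  · intro x y
    induction x using Quot.ind with | _ t =>
    induction y using Quot.ind with | _ u =>
    rfl
  · rintro ⟨g, gapp, gk, gs, gi, ge⟩ ⟨h1, h2⟩
    have key : ∀ t : Tm (Fin n ⊕ A.carrier),
        g (Quot.mk _ t) = evalTm A B (Fin n) f b t := by
      intro t
      induction t with
      | of x =>
        cases x with
        | inl v => exact h2 v
        | inr a => exact h1 a
      | app t u iht ihu =>
        have : Quot.mk (PolyEq A (Fin n)) (Tm.app t u) =
            (polyAlg A (Fin n)).app (Quot.mk _ t) (Quot.mk _ u) := rfl
        rw [this]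
        exact (gapp (Quot.mk _ t) (Quot.mk _ u)).trans (congrArg₂ B.app iht ihu)
    have : g = fun x => Quot.lift (evalTm A B (Fin n) f b)
        (fun _ _ h => evalTm_sound A B (Fin n) f b h) x := by
      funext x
      induction x using Quot.ind with | _ t => exact key t
    subst this
    rfl
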